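/- Let d ≥ 1 and let K ⊆ ℝ^d be a nonempty compact set. For all a, ζ ∈ ℝ^d with ‖a‖ = ‖ζ‖ = 1 there exist x₀ ∈ K and ξ ∈ ℝ^d with ‖ξ‖ = 1 such that: (i) ⟨x₀, ξ⟩ = sup_{y ∈ K} ⟨y, ξ⟩; (ii) ⟨a, ξ⟩ ≠ 0; (iii) either ⟨a, ξ⟩ < 0 and a − 2⟨a, ξ⟩·ξ = ζ, or ⟨a, ξ⟩ > 0 and ζ = a; (iv) x₀ + t·ζ ∉ K for every t > 0. -/

import Mathlib

open scoped RealInnerProductSpace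

lemma aux_support (d : ℕ) (K : Set (EuclideanSpace ℝ (Fin d))) (hKne : K.Nonempty)
    (hK : IsCompact K) (ξ ζ : EuclideanSpace ℝ (Fin d)) (hpos : 0 < ⟪ζ, ξ⟫) :
    ∃ x₀ ∈ K, ⟪x₀, ξ⟫ = sSup ((fun y => ⟪y, ξ⟫) '' K) ∧
      ∀ t : ℝ, 0 < t → x₀ + t • ζ ∉ K := by
  have hcont : Continuous fun y : EuclideanSpace ℝ (Fin d) => ⟪y, ξ⟫ :=
    continuous_id.inner continuous_const
  obtain ⟨x₀, hx₀K, hmax⟩ := hK.exists_isMaxOn hKne hcont.continuousOn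
  have hgreat : IsGreatest ((fun y => ⟪y, ξ⟫) '' K) ⟪x₀, ξ⟫ := by
    refine ⟨Set.mem_image_of_mem _ hx₀K, ?_⟩
    rintro z ⟨y, hy, rfl⟩
    exact hmax hy
  refine ⟨x₀, hx₀K, (hgreat.csSup_eq).symm, ?_⟩
  intro t ht hmem
  have h1 : ⟪x₀ + t • ζ, ξ⟫ ≤ ⟪x₀, ξ⟫ := hmax hmem
  have h2 : ⟪x₀ + t • ζ, ξ⟫ = ⟪x₀, ξ⟫ + t * ⟪ζ, ξ⟫ := by
    rw [inner_add_left, real_inner_smul_left]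
  nlinarith

/-- Lemma 5.4 (abstract form): for every incident unit direction `a` and every target
unit direction `ζ` there is a support point `x₀` of the compact set `K` with unit
normal `ξ`, non-tangential to `a`, such that `ζ` is obtained from `a` by specular
reflection in `ξ` (illuminated case) or `ζ = a` (shadow case), and the ray from `x₀`
in direction `ζ` never meets `K` again. -/
theorem stmt_4 (d : ℕ) (hd : 1 ≤ d)
    (K : Set (EuclideanSpace ℝ (Fin d))) (hKne : K.Nonempty) (hK : IsCompact K)
    (a ζ : EuclideanSpace ℝ (Fin d)) (ha : ‖a‖ = 1) (hζ : ‖ζ‖ = 1) :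
    ∃ x₀ ∈ K, ∃ ξ : EuclideanSpace ℝ (Fin d), ‖ξ‖ = 1 ∧
      ⟪x₀, ξ⟫ = sSup ((fun y => ⟪y, ξ⟫) '' K) ∧
      ⟪a, ξ⟫ ≠ 0 ∧
      ((⟪a, ξ⟫ < 0 ∧ a - (2 * ⟪a, ξ⟫) • ξ = ζ) ∨ (0 < ⟪a, ξ⟫ ∧ ζ = a)) ∧
      ∀ t : ℝ, 0 < t → x₀ + t • ζ ∉ K := by
  by_cases hza : ζ = a
  · -- shadow case: ξ = a
    have haa : ⟪a, a⟫ = 1 := by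
      rw [real_inner_self_eq_norm_sq, ha]; norm_num
    have hpos : (0:ℝ) < ⟪ζ, a⟫ := by rw [hza, haa]; norm_num
    obtain ⟨x₀, hx₀K, hsup, hray⟩ := aux_support d K hKne hK a ζ hpos
    exact ⟨x₀, hx₀K, a, ha, hsup, by rw [haa]; norm_num,
      Or.inr ⟨by rw [haa]; norm_num, hza⟩, hray⟩
  · -- illuminated case: ξ = (ζ - a)/‖ζ - a‖
    have hsub : ζ - a ≠ 0 := sub_ne_zero.mpr hza
    set n : ℝ := ‖ζ - a‖ with hn
    have hnpos : 0 < n := norm_pos_iff.mpr hsub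
    set ξ : EuclideanSpace ℝ (Fin d) := n⁻¹ • (ζ - a) with hξ
    have hξnorm : ‖ξ‖ = 1 := by
      rw [hξ, norm_smul, norm_inv, Real.norm_eq_abs, abs_of_pos hnpos, ← hn,
        inv_mul_cancel₀ hnpos.ne']
    have hzz : ⟪ζ, ζ⟫ = 1 := by rw [real_inner_self_eq_norm_sq, hζ]; norm_num
    have haa : ⟪a, a⟫ = 1 := by rw [real_inner_self_eq_norm_sq, ha]; norm_num
    have hn2 : n ^ 2 = ⟪ζ - a, ζ - a⟫ := by
      rw [real_inner_self_eq_norm_sq]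
    have hexp : ⟪ζ - a, ζ - a⟫ = 2 - 2 * ⟪a, ζ⟫ := by
      rw [inner_sub_left, inner_sub_right, inner_sub_right, hzz, haa,
        real_inner_comm ζ a]
      ring
    have hazma : ⟪a, ζ - a⟫ = -(n ^ 2) / 2 := by
      rw [inner_sub_right, haa, hn2, hexp]; ring
    have hzzma : ⟪ζ, ζ - a⟫ = n ^ 2 / 2 := by
      rw [inner_sub_right, hzz, real_inner_comm a ζ, hn2, hexp]; ring
    have haξ : ⟪a, ξ⟫ = -n / 2 := by
      rw [hξ, real_inner_smul_right, hazma]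
      field_simp
    have hzξ : ⟪ζ, ξ⟫ = n / 2 := by
      rw [hξ, real_inner_smul_right, hzzma]
      field_simp
    have hpos : 0 < ⟪ζ, ξ⟫ := by rw [hzξ]; positivity
    obtain ⟨x₀, hx₀K, hsup, hray⟩ := aux_support d K hKne hK ξ ζ hpos
    have hneg : ⟪a, ξ⟫ < 0 := by rw [haξ]; linarith
    refine ⟨x₀, hx₀K, ξ, hξnorm, hsup, hneg.ne, ?_, hray⟩
    left
    refine ⟨hneg, ?_⟩
    rw [haξ, hξ, smul_smul]
    have : 2 * (-n / 2) * n⁻¹ = -1 := by field_simp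
    rw [this]
    simp
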